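/- arXiv:2502.09898 — 3 statements merged into one kernel-verified Lean document; each statement's English description precedes it below -/
import Mathlib

section
/- Let (φ_i)_{i∈I} be a finite family of vectors in ℝ^n and let C denote the ReLU layer with zero bias associated with the symmetrized family (φ_i)_{i∈I} ∪ (−φ_i)_{i∈I}, i.e., C(x) = (ReLU(⟨x,φ_i⟩))_{i∈I} ⊕ (ReLU(−⟨x,φ_i⟩))_{i∈I}. If u ∈ ℝ^n is a unit vector and A ≥ 0 satisfies Σ_{i∈I}|⟨u,φ_i⟩|² = A, then ‖C(u) − C(−u)‖² = 2A = (1/2)·A·‖u − (−u)‖². Consequently, if A is the optimal lower frame bound of (φ_i)_{i∈I} (attained at some unit vector u), the optimal lower Lipschitz bound of C equals (1/√2)·√A. -/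
open RealInnerProductSpace

lemma normsq_eucl {κ : Type*} [Fintype κ] (v : EuclideanSpace ℝ κ) :
    ‖v‖ ^ 2 = ∑ j, (v j) ^ 2 := by
  rw [EuclideanSpace.norm_eq, Real.sq_sqrt (by positivity)]
  simp [sq_abs]

lemma relu_key (a b : ℝ) :
    (a - b) ^ 2 / 2 ≤ (max 0 a - max 0 b) ^ 2 + (max 0 (-a) - max 0 (-b)) ^ 2 := by
  have h1 : max 0 a - max 0 (-a) = a := by
    rcases le_total 0 a with h | h
    · rw [max_eq_right h, max_eq_left (by linarith)]; ring
    · rw [max_eq_left h, max_eq_right (by linarith)]; ring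
  have h2 : max 0 b - max 0 (-b) = b := by
    rcases le_total 0 b with h | h
    · rw [max_eq_right h, max_eq_left (by linarith)]; ring
    · rw [max_eq_left h, max_eq_right (by linarith)]; ring
  set p := max 0 a - max 0 b with hp
  set q := max 0 (-a) - max 0 (-b) with hq
  have hpq : p - q = a - b := by rw [hp, hq]; linarith
  clear_value p q
  rw [← hpq]
  nlinarith [sq_nonneg (p + q)]

/-- For the zero-bias ReLU layer `C` of the symmetrized family
`(φ_i) ∪ (−φ_i)`: if `u` is a unit vector with `Σ_i ⟨u,φ_i⟩² = A`, then
`‖C(u) − C(−u)‖² = 2A = (1/2)·A·‖u − (−u)‖²`. Consequently, if `A` is moreover a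
lower frame bound of `(φ_i)` (so it is the optimal one, attained at `u`), then the
optimal lower Lipschitz bound of `C` equals `(1/√2)·√A`. -/
theorem symmetrized_relu_optimal_lower_lipschitz
    {n : ℕ} {ι : Type*} [Fintype ι]
    (φ : ι → EuclideanSpace ℝ (Fin n))
    (C : EuclideanSpace ℝ (Fin n) → EuclideanSpace ℝ (ι ⊕ ι))
    (hC : ∀ x, C x = Sum.elim (fun i : ι => max 0 ⟪x, φ i⟫) (fun i : ι => max 0 (-⟪x, φ i⟫)))
    (A : ℝ) (hA : 0 ≤ A)
    (u : EuclideanSpace ℝ (Fin n)) (hu : ‖u‖ = 1)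
    (huA : ∑ i : ι, ⟪u, φ i⟫ ^ 2 = A) :
    (‖C u - C (-u)‖ ^ 2 = 2 * A ∧ 2 * A = (1 / 2) * A * ‖u - (-u)‖ ^ 2) ∧
      ((∀ z : EuclideanSpace ℝ (Fin n), A * ‖z‖ ^ 2 ≤ ∑ i : ι, ⟪z, φ i⟫ ^ 2) →
        IsGreatest
          {κ : ℝ | ∀ x y : EuclideanSpace ℝ (Fin n), κ * ‖x - y‖ ≤ ‖C x - C y‖}
          ((1 / Real.sqrt 2) * Real.sqrt A)) := by
  -- general norm computation
  have hnorm : ∀ x y : EuclideanSpace ℝ (Fin n),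
      ‖C x - C y‖ ^ 2 = ∑ i : ι, (max 0 ⟪x, φ i⟫ - max 0 ⟪y, φ i⟫) ^ 2
        + ∑ i : ι, (max 0 (-⟪x, φ i⟫) - max 0 (-⟪y, φ i⟫)) ^ 2 := by
    intro x y
    rw [normsq_eucl, Fintype.sum_sum_type]
    simp [hC, PiLp.sub_apply]
  have huu : ‖u - (-u)‖ ^ 2 = 4 := by
    have : u - (-u) = (2:ℝ) • u := by
      ext j; simp [PiLp.sub_apply, PiLp.smul_apply]; ring
    rw [this, norm_smul, hu]
    norm_num
  have hCu : ‖C u - C (-u)‖ ^ 2 = 2 * A := by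
    rw [hnorm]
    have : ∀ i : ι, ⟪(-u : EuclideanSpace ℝ (Fin n)), φ i⟫ = -⟪u, φ i⟫ := fun i => by
      rw [inner_neg_left]
    simp only [this, neg_neg]
    have e1 : ∀ a : ℝ, max 0 a - max 0 (-a) = a := by
      intro a
      rcases le_total 0 a with h | h
      · rw [max_eq_right h, max_eq_left (by linarith)]; ring
      · rw [max_eq_left h, max_eq_right (by linarith)]; ring
    have e2 : ∀ a : ℝ, max 0 (-a) - max 0 a = -a := fun a => by
      have := e1 a; linarith
    simp only [e1, e2, neg_sq]
    rw [huA]; ring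
  refine ⟨⟨hCu, by rw [huu]; ring⟩, fun hframe => ?_⟩
  constructor
  · -- membership: lower Lipschitz bound
    intro x y
    have key : A / 2 * ‖x - y‖ ^ 2 ≤ ‖C x - C y‖ ^ 2 := by
      rw [hnorm]
      have h1 : ∀ i : ι, (⟪x, φ i⟫ - ⟪y, φ i⟫) ^ 2 / 2 ≤
          (max 0 ⟪x, φ i⟫ - max 0 ⟪y, φ i⟫) ^ 2
            + (max 0 (-⟪x, φ i⟫) - max 0 (-⟪y, φ i⟫)) ^ 2 :=
        fun i => relu_key _ _
      have h2 : ∑ i : ι, (⟪x, φ i⟫ - ⟪y, φ i⟫) ^ 2 / 2 ≤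
          ∑ i : ι, (max 0 ⟪x, φ i⟫ - max 0 ⟪y, φ i⟫) ^ 2
            + ∑ i : ι, (max 0 (-⟪x, φ i⟫) - max 0 (-⟪y, φ i⟫)) ^ 2 := by
        rw [← Finset.sum_add_distrib]
        exact Finset.sum_le_sum fun i _ => h1 i
      refine le_trans ?_ h2
      have h3 := hframe (x - y)
      have h4 : ∀ i : ι, ⟪x - y, φ i⟫ = ⟪x, φ i⟫ - ⟪y, φ i⟫ := fun i => inner_sub_left _ _ _
      simp only [h4] at h3
      rw [← Finset.sum_div]
      linarith
    have hs2 : (Real.sqrt 2) ^ 2 = 2 := Real.sq_sqrt (by norm_num)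
    have hsA : (Real.sqrt A) ^ 2 = A := Real.sq_sqrt hA
    have hsq : ((1 / Real.sqrt 2) * Real.sqrt A * ‖x - y‖) ^ 2 ≤ ‖C x - C y‖ ^ 2 := by
      have h2pos : (0:ℝ) < Real.sqrt 2 := Real.sqrt_pos.mpr (by norm_num)
      have : ((1 / Real.sqrt 2) * Real.sqrt A * ‖x - y‖) ^ 2 = A / 2 * ‖x - y‖ ^ 2 := by
        field_simp
        nlinarith [hs2, hsA]
      rw [this]; exact key
    have h1 : (0:ℝ) ≤ (1 / Real.sqrt 2) * Real.sqrt A * ‖x - y‖ := by positivity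
    nlinarith [norm_nonneg (C x - C y)]
  · -- upper bound
    intro κ hκ
    have hκu := hκ u (-u)
    have hCuv : ‖C u - C (-u)‖ = Real.sqrt (2 * A) := by
      rw [← hCu, Real.sqrt_sq (norm_nonneg _)]
    have huun : ‖u - (-u)‖ = 2 := by
      nlinarith [huu, norm_nonneg (u - (-u))]
    rw [hCuv, huun] at hκu
    have hs2 : (Real.sqrt 2) ^ 2 = 2 := Real.sq_sqrt (by norm_num)
    have hsA : (Real.sqrt A) ^ 2 = A := Real.sq_sqrt hA
    have hmul : Real.sqrt (2 * A) = Real.sqrt 2 * Real.sqrt A := Real.sqrt_mul (by norm_num) A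
    have h2pos : (0:ℝ) < Real.sqrt 2 := Real.sqrt_pos.mpr (by norm_num)
    rw [hmul] at hκu
    rw [div_mul_eq_mul_div, one_mul, le_div_iff₀ h2pos]
    nlinarith [mul_le_mul_of_nonneg_right hκu h2pos.le, Real.sqrt_nonneg A]
end

section
/- Let (φ_i)_{i∈I} be a finite frame for ℝ^n and let λ > 0. Then the saturated measurement operator S_λ is one-to-one on the closed unit ball B of ℝ^n if and only if S_λ is bi-Lipschitz on B, i.e., there exist constants 0 < c ≤ C such that c‖x−y‖ ≤ ‖S_λ(x) − S_λ(y)‖ ≤ C‖x−y‖ for all x, y ∈ B. In particular, saturation recovery is stable at the critical saturation level. -/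
open RealInnerProductSpace Filter Topology

private lemma clamp_abs_lt {lam t : ℝ} (h : |t| < lam) : max (min t lam) (-lam) = t := by
  rw [abs_lt] at h
  rw [min_eq_left h.2.le, max_eq_left (by linarith)]

private lemma clamp_ge {lam t : ℝ} (hlam : 0 ≤ lam) (h : lam ≤ t) :
    max (min t lam) (-lam) = lam := by
  rw [min_eq_right h, max_eq_left (by linarith)]

private lemma clamp_le' {lam t : ℝ} (hlam : 0 ≤ lam) (h : t ≤ -lam) :
    max (min t lam) (-lam) = -lam := by
  rw [min_eq_left (by linarith), max_eq_right (by linarith)]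

private lemma clamp_lip {lam a b : ℝ} :
    |max (min a lam) (-lam) - max (min b lam) (-lam)| ≤ |a - b| := by
  refine (abs_max_sub_max_le_abs _ _ _).trans ?_
  have := abs_min_sub_min_le_max a lam b lam
  simpa using this

private lemma clamp_neg (lam x : ℝ) (hlam : 0 ≤ lam) :
    max (min (-x) lam) (-lam) = -(max (min x lam) (-lam)) := by
  rcases le_total x (-lam) with h | h
  · rw [clamp_le' hlam h, clamp_ge hlam (by linarith), neg_neg]
  · rcases le_total lam x with h2 | h2
    · rw [clamp_ge hlam h2, clamp_le' hlam (by linarith)]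
    · rw [min_eq_left h2, min_eq_left (by linarith), max_eq_left h, max_eq_left (by linarith)]

private lemma sign_mul_min_eq_clamp {lam : ℝ} (hlam : 0 < lam) (t : ℝ) :
    Real.sign t * min |t| lam = max (min t lam) (-lam) := by
  rcases lt_trichotomy t 0 with h | h | h
  · rw [Real.sign_of_neg h, abs_of_neg h]
    rcases le_total (-t) lam with h2 | h2
    · rw [min_eq_left h2, min_eq_left (by linarith), max_eq_left (by linarith)]; ring
    · rw [min_eq_right h2, min_eq_left (by linarith), max_eq_right (by linarith)]; ring
  · subst h; simp [min_eq_left hlam.le, max_eq_left (by linarith : -lam ≤ (0:ℝ))]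
  · rw [Real.sign_of_pos h, abs_of_pos h, one_mul, max_eq_left]
    exact le_trans (by linarith) (le_min h.le hlam.le)

private lemma clamp_key {lam a b c : ℝ} (hb : 0 < b) (hc : 0 < c)
    (h1 : c ≤ a - b)
    (h2 : max (min a lam) (-lam) - max (min b lam) (-lam) < c / 2) :
    lam < (a + b) / 2 := by
  rcases le_or_gt lam b with hbl | hbl
  · linarith
  · have hcb : max (min b lam) (-lam) = b := clamp_abs_lt (by rw [abs_of_pos hb]; exact hbl)
    have hca : min (b + c) lam ≤ max (min a lam) (-lam) :=
      le_max_of_le_left (min_le_min (by linarith) le_rfl)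
    have h3 : min (b + c) lam - b < c / 2 := by rw [hcb] at h2; linarith
    rcases min_cases (b + c) lam with ⟨he, _⟩ | ⟨he, hle⟩ <;> rw [he] at h3
    · linarith
    · linarith

private lemma coord_le_norm {ι : Type*} [Fintype ι] (f : EuclideanSpace ℝ ι) (i : ι) :
    |f i| ≤ ‖f‖ := by
  rw [EuclideanSpace.norm_eq, show |f i| = Real.sqrt (‖f i‖ ^ 2) by
    rw [Real.norm_eq_abs, Real.sqrt_sq_eq_abs, abs_abs]]
  exact Real.sqrt_le_sqrt (Finset.single_le_sum (f := fun j => ‖f j‖ ^ 2)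
    (fun j _ => sq_nonneg _) (Finset.mem_univ i))

private lemma norm_le_of_coord {ι : Type*} [Fintype ι] (f : EuclideanSpace ℝ ι) (g : ι → ℝ)
    (h : ∀ i, |f i| ≤ g i) : ‖f‖ ≤ Real.sqrt (∑ i, (g i) ^ 2) := by
  rw [EuclideanSpace.norm_eq]
  apply Real.sqrt_le_sqrt
  apply Finset.sum_le_sum
  intro i _
  rw [Real.norm_eq_abs]
  exact pow_le_pow_left₀ (abs_nonneg _) (h i) 2

set_option maxHeartbeats 2000000 in
/-- For a finite frame `(φ_i)` for `ℝ^n` and `λ > 0`, the saturated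
measurement operator `S_λ` is one-to-one on the closed unit ball if and only if it is
bi-Lipschitz on the ball. In particular, saturation recovery is stable at the
critical saturation level. -/
theorem saturation_injective_iff_biLipschitz
    {n : ℕ} {ι : Type*} [Fintype ι]
    (φ : ι → EuclideanSpace ℝ (Fin n))
    (hframe : Submodule.span ℝ (Set.range φ) = ⊤)
    (lam : ℝ) (hlam : 0 < lam)
    (S : EuclideanSpace ℝ (Fin n) → EuclideanSpace ℝ ι)
    (hS : ∀ x, S x = fun i : ι => Real.sign ⟪x, φ i⟫ * min |⟪x, φ i⟫| lam) :
    Set.InjOn S (Metric.closedBall (0 : EuclideanSpace ℝ (Fin n)) 1) ↔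
      ∃ c C : ℝ, 0 < c ∧ c ≤ C ∧
        ∀ x ∈ Metric.closedBall (0 : EuclideanSpace ℝ (Fin n)) 1,
          ∀ y ∈ Metric.closedBall (0 : EuclideanSpace ℝ (Fin n)) 1,
            c * ‖x - y‖ ≤ ‖S x - S y‖ ∧ ‖S x - S y‖ ≤ C * ‖x - y‖ := by
  classical
  have hS' : ∀ x i, S x i = max (min ⟪x, φ i⟫ lam) (-lam) := by
    intro x i; rw [hS]; exact sign_mul_min_eq_clamp hlam _
  constructor
  · intro hinj
    -- continuity of S
    have hScont : Continuous S := by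
      have hrw : S = fun x => (WithLp.equiv 2 (ι → ℝ)).symm
          (fun i => max (min ⟪x, φ i⟫ lam) (-lam)) := by
        funext x
        exact PiLp.ext fun i => hS' x i
      rw [hrw]
      refine Continuous.comp ?_ ?_
      · exact PiLp.continuous_toLp 2 (fun _ : ι => ℝ)
      · refine continuous_pi fun i => ?_
        exact ((continuous_id.inner continuous_const).min continuous_const).max continuous_const
    by_contra hno
    push_neg at hno
    set B := Metric.closedBall (0 : EuclideanSpace ℝ (Fin n)) 1 with hB
    set C₀ : ℝ := Real.sqrt (∑ i, ‖φ i‖ ^ 2) with hC₀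
    have hupper : ∀ x y : EuclideanSpace ℝ (Fin n), ‖S x - S y‖ ≤ C₀ * ‖x - y‖ := by
      intro x y
      have h1 : ‖S x - S y‖ ≤ Real.sqrt (∑ i, (‖φ i‖ * ‖x - y‖) ^ 2) := by
        apply norm_le_of_coord
        intro i
        have he : (S x - S y) i = S x i - S y i := rfl
        rw [he, hS' x i, hS' y i]
        refine clamp_lip.trans ?_
        rw [show ⟪x, φ i⟫ - ⟪y, φ i⟫ = ⟪x - y, φ i⟫ by rw [inner_sub_left]]
        rw [mul_comm]
        exact abs_real_inner_le_norm _ _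
      refine h1.trans (le_of_eq ?_)
      have h2 : ∑ i, (‖φ i‖ * ‖x - y‖) ^ 2 = (∑ i, ‖φ i‖ ^ 2) * ‖x - y‖ ^ 2 := by
        rw [Finset.sum_mul]
        exact Finset.sum_congr rfl fun i _ => (mul_pow _ _ _)
      rw [h2, Real.sqrt_mul (by positivity), Real.sqrt_sq (norm_nonneg _)]
    -- extraction of a bad sequence
    have hex : ∀ k : ℕ, ∃ p : (EuclideanSpace ℝ (Fin n)) × (EuclideanSpace ℝ (Fin n)),
        p.1 ∈ B ∧ p.2 ∈ B ∧ ‖S p.1 - S p.2‖ < (1 / (k + 1)) * ‖p.1 - p.2‖ := by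
      intro k
      have hck : (0:ℝ) < 1 / (k + 1) := by positivity
      obtain ⟨x, hx, y, hy, hxy⟩ := hno (1 / (k + 1)) (max (1 / (k + 1)) C₀) hck (le_max_left _ _)
      refine ⟨(x, y), hx, hy, ?_⟩
      by_contra hcon
      push_neg at hcon
      have h3 := hxy hcon
      have h4 : ‖S x - S y‖ ≤ max (1 / ((k:ℝ) + 1)) C₀ * ‖x - y‖ := (hupper x y).trans
        (mul_le_mul_of_nonneg_right (le_max_right _ _) (norm_nonneg _))
      exact absurd h4 (not_le.2 h3)
    choose P hP1 hP2 hPlt using hex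
    set X : ℕ → EuclideanSpace ℝ (Fin n) := fun k => (P k).1 with hXdef
    set Y : ℕ → EuclideanSpace ℝ (Fin n) := fun k => (P k).2 with hYdef
    have hXY : ∀ k, X k ≠ Y k := by
      intro k h
      have h1 := hPlt k
      rw [show (P k).1 = X k from rfl, show (P k).2 = Y k from rfl, h, sub_self, sub_self,
        norm_zero, norm_zero, mul_zero] at h1
      exact lt_irrefl _ h1
    have hd : ∀ k, (0:ℝ) < ‖X k - Y k‖ := fun k =>
      norm_pos_iff.2 (sub_ne_zero.2 (hXY k))
    set U : ℕ → EuclideanSpace ℝ (Fin n) := fun k => ‖X k - Y k‖⁻¹ • (X k - Y k) with hUdef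
    have hU : ∀ k, ‖U k‖ = 1 := by
      intro k
      rw [hUdef]
      simp only [norm_smul, norm_inv, norm_norm]
      exact inv_mul_cancel₀ (hd k).ne'
    have hXYU : ∀ k, X k - Y k = ‖X k - Y k‖ • U k := by
      intro k
      rw [hUdef, smul_smul, mul_inv_cancel₀ (hd k).ne', one_smul]
    -- compactness
    have hcpt : IsCompact (B ×ˢ (B ×ˢ (Metric.sphere (0 : EuclideanSpace ℝ (Fin n)) 1))) :=
      (isCompact_closedBall _ _).prod ((isCompact_closedBall _ _).prod (isCompact_sphere _ _))
    have hmem : ∀ k, (X k, Y k, U k) ∈ B ×ˢ (B ×ˢ (Metric.sphere (0 : EuclideanSpace ℝ (Fin n)) 1)) := by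
      intro k
      exact ⟨hP1 k, hP2 k, by rw [mem_sphere_zero_iff_norm]; exact hU k⟩
    obtain ⟨L, hLmem, ψ, hψmono, hψtend⟩ := hcpt.tendsto_subseq hmem
    obtain ⟨xb, yb, ub⟩ := L
    have hub : ‖ub‖ = 1 := mem_sphere_zero_iff_norm.1 hLmem.2.2
    have hXt : Tendsto (fun k => X (ψ k)) atTop (𝓝 xb) :=
      (continuous_fst.tendsto _).comp hψtend
    have hYt : Tendsto (fun k => Y (ψ k)) atTop (𝓝 yb) :=
      ((continuous_fst.comp continuous_snd).tendsto _).comp hψtend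
    have hUt : Tendsto (fun k => U (ψ k)) atTop (𝓝 ub) :=
      ((continuous_snd.comp continuous_snd).tendsto _).comp hψtend
    -- norm of S-difference tends to zero
    have hb2 : ∀ k, ‖X k - Y k‖ ≤ 2 := by
      intro k
      have h1 : ‖X k‖ ≤ 1 := by simpa [hB, Metric.mem_closedBall, dist_zero_right] using hP1 k
      have h2 : ‖Y k‖ ≤ 1 := by simpa [hB, Metric.mem_closedBall, dist_zero_right] using hP2 k
      calc ‖X k - Y k‖ ≤ ‖X k‖ + ‖Y k‖ := norm_sub_le _ _
        _ ≤ 2 := by linarith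
    have hS0 : Tendsto (fun k => ‖S (X (ψ k)) - S (Y (ψ k))‖) atTop (𝓝 0) := by
      refine squeeze_zero (g := fun k : ℕ => 2 * (1 / (k + 1))) (fun k => norm_nonneg _) ?_ ?_
      · intro k
        have h1 := hPlt (ψ k)
        have h2 : (1:ℝ) / (ψ k + 1) ≤ 1 / (k + 1) := by
          apply one_div_le_one_div_of_le (by positivity)
          have h3 : (k:ℝ) ≤ (ψ k : ℝ) := Nat.cast_le.2 hψmono.le_apply
          linarith
        calc ‖S (X (ψ k)) - S (Y (ψ k))‖ ≤ (1 / (ψ k + 1)) * ‖X (ψ k) - Y (ψ k)‖ := h1.le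
          _ ≤ (1 / (k + 1)) * 2 := by
              apply mul_le_mul h2 (hb2 _) (norm_nonneg _) (by positivity)
          _ = 2 * (1 / (k + 1)) := by ring
      · have := tendsto_one_div_add_atTop_nhds_zero_nat.const_mul (2:ℝ)
        simpa using this
    by_cases hxyb : xb = yb
    · -- the hard case : both limits coincide
      have hinner_cont : ∀ z : EuclideanSpace ℝ (Fin n),
          Continuous fun x : EuclideanSpace ℝ (Fin n) => (⟪x, z⟫ : ℝ) :=
        fun z => continuous_id.inner continuous_const
      have hat : ∀ i, Tendsto (fun k => (⟪X (ψ k), φ i⟫ : ℝ)) atTop (𝓝 ⟪xb, φ i⟫) :=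
        fun i => (((hinner_cont (φ i))).tendsto xb).comp hXt
      have hbt : ∀ i, Tendsto (fun k => (⟪Y (ψ k), φ i⟫ : ℝ)) atTop (𝓝 ⟪xb, φ i⟫) := by
        intro i
        have := (((hinner_cont (φ i))).tendsto yb).comp hYt
        rwa [← hxyb] at this
      have hwt : ∀ i, Tendsto (fun k => (⟪U (ψ k), φ i⟫ : ℝ)) atTop (𝓝 ⟪ub, φ i⟫) :=
        fun i => (((hinner_cont (φ i))).tendsto ub).comp hUt
      have hmt : Tendsto (fun k => (2⁻¹ : ℝ) • (X (ψ k) + Y (ψ k))) atTop (𝓝 xb) := by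
        have h1 := (hXt.add hYt).const_smul (2⁻¹ : ℝ)
        rw [← hxyb] at h1
        have h2 : (2⁻¹ : ℝ) • (xb + xb) = xb := by
          rw [← two_smul ℝ xb, smul_smul]
          norm_num
        rwa [h2] at h1
      have hm_inner : ∀ i k, (⟪(2⁻¹ : ℝ) • (X (ψ k) + Y (ψ k)), φ i⟫ : ℝ)
          = (⟪X (ψ k), φ i⟫ + ⟪Y (ψ k), φ i⟫) / 2 := by
        intro i k
        rw [real_inner_smul_left, inner_add_left]
        ring
      have hab : ∀ i k, (⟪X (ψ k), φ i⟫ : ℝ) - ⟪Y (ψ k), φ i⟫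
          = ‖X (ψ k) - Y (ψ k)‖ * ⟪U (ψ k), φ i⟫ := by
        intro i k
        rw [← inner_sub_left]
        conv_lhs => rw [hXYU (ψ k)]
        rw [real_inner_smul_left]
      have hcb : ∀ i k, |max (min (⟪X (ψ k), φ i⟫ : ℝ) lam) (-lam)
            - max (min (⟪Y (ψ k), φ i⟫ : ℝ) lam) (-lam)|
          < ‖X (ψ k) - Y (ψ k)‖ * (1 / (ψ k + 1)) := by
        intro i k
        have h1 : (S (X (ψ k)) - S (Y (ψ k))) i = S (X (ψ k)) i - S (Y (ψ k)) i := rfl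
        have h2 := coord_le_norm (S (X (ψ k)) - S (Y (ψ k))) i
        rw [h1, hS' _ i, hS' _ i] at h2
        calc |max (min (⟪X (ψ k), φ i⟫ : ℝ) lam) (-lam)
            - max (min (⟪Y (ψ k), φ i⟫ : ℝ) lam) (-lam)| ≤ ‖S (X (ψ k)) - S (Y (ψ k))‖ := h2
          _ < (1 / (ψ k + 1)) * ‖X (ψ k) - Y (ψ k)‖ := hPlt (ψ k)
          _ = ‖X (ψ k) - Y (ψ k)‖ * (1 / (ψ k + 1)) := by ring
      have hpsi0 : Tendsto (fun k => 1 / ((ψ k : ℝ) + 1)) atTop (𝓝 0) :=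
        tendsto_one_div_add_atTop_nhds_zero_nat.comp hψmono.tendsto_atTop
      -- key eventual claim
      have key : ∀ i, (⟪ub, φ i⟫ : ℝ) = 0 ∨
          ∀ᶠ k in atTop, lam < |(⟪(2⁻¹ : ℝ) • (X (ψ k) + Y (ψ k)), φ i⟫ : ℝ)| := by
        intro i
        by_cases hv : (⟪ub, φ i⟫ : ℝ) = 0
        · exact Or.inl hv
        right
        have habs : 0 < |(⟪ub, φ i⟫ : ℝ)| := abs_pos.2 hv
        rcases lt_trichotomy |(⟪xb, φ i⟫ : ℝ)| lam with hti | hti | hti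
        · -- inactive coordinate : derive v i = 0, contradiction
          exfalso
          apply hv
          have hev : ∀ᶠ k in atTop, |(⟪X (ψ k), φ i⟫ : ℝ)| < lam ∧ |(⟪Y (ψ k), φ i⟫ : ℝ)| < lam :=
            ((hat i).abs.eventually_lt_const hti).and ((hbt i).abs.eventually_lt_const hti)
          have hw0 : Tendsto (fun k => (⟪U (ψ k), φ i⟫ : ℝ)) atTop (𝓝 0) := by
            refine squeeze_zero_norm' ?_ hpsi0
            filter_upwards [hev] with k hk
            have h1 := hcb i k
            rw [clamp_abs_lt hk.1, clamp_abs_lt hk.2, hab i k, abs_mul,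
              abs_of_pos (hd (ψ k))] at h1
            have h2 := (mul_lt_mul_iff_right₀ (hd (ψ k))).1 h1
            simpa using h2.le
          exact tendsto_nhds_unique (hwt i) hw0
        · -- boundary coordinate
          have hB8 : ∀ᶠ k in atTop, 1 / ((ψ k : ℝ) + 1) < |(⟪ub, φ i⟫ : ℝ)| / 8 :=
            hpsi0.eventually_lt_const (by positivity)
          rcases (abs_eq hlam.le).mp hti with htl | htl
          · -- ⟪xb, φ i⟫ = lam
            have hC : ∀ᶠ k in atTop, 0 < (⟪X (ψ k), φ i⟫ : ℝ) ∧ 0 < (⟪Y (ψ k), φ i⟫ : ℝ) :=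
              ((hat i).eventually_const_lt (htl ▸ hlam)).and
                ((hbt i).eventually_const_lt (htl ▸ hlam))
            rcases lt_or_gt_of_ne hv with hvneg | hvpos
            · have hD : ∀ᶠ k in atTop, (⟪U (ψ k), φ i⟫ : ℝ) < ⟪ub, φ i⟫ / 2 :=
                (hwt i).eventually_lt_const (by linarith)
              filter_upwards [hC, hD, hB8] with k hck hdk hbk
              have hva : |(⟪ub, φ i⟫ : ℝ)| = -⟪ub, φ i⟫ := abs_of_neg hvneg
              have h1 : ‖X (ψ k) - Y (ψ k)‖ * (|(⟪ub, φ i⟫ : ℝ)| / 2)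
                  ≤ ⟪Y (ψ k), φ i⟫ - ⟪X (ψ k), φ i⟫ := by
                have h2 : (⟪Y (ψ k), φ i⟫ : ℝ) - ⟪X (ψ k), φ i⟫
                    = ‖X (ψ k) - Y (ψ k)‖ * (-⟪U (ψ k), φ i⟫) := by
                  have := hab i k; linarith [this]
                rw [h2]
                apply mul_le_mul_of_nonneg_left _ (hd (ψ k)).le
                rw [hva]; linarith
              have h3 : max (min (⟪Y (ψ k), φ i⟫ : ℝ) lam) (-lam)
                  - max (min (⟪X (ψ k), φ i⟫ : ℝ) lam) (-lam)
                  < ‖X (ψ k) - Y (ψ k)‖ * (|(⟪ub, φ i⟫ : ℝ)| / 2) / 2 := by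
                have h4 := hcb i k
                have h5 : max (min (⟪Y (ψ k), φ i⟫ : ℝ) lam) (-lam)
                    - max (min (⟪X (ψ k), φ i⟫ : ℝ) lam) (-lam)
                    ≤ |max (min (⟪X (ψ k), φ i⟫ : ℝ) lam) (-lam)
                    - max (min (⟪Y (ψ k), φ i⟫ : ℝ) lam) (-lam)| := by
                  rw [abs_sub_comm]; exact le_abs_self _
                have h6 : ‖X (ψ k) - Y (ψ k)‖ * (1 / (ψ k + 1))
                    < ‖X (ψ k) - Y (ψ k)‖ * (|(⟪ub, φ i⟫ : ℝ)| / 8) :=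
                  mul_lt_mul_of_pos_left hbk (hd (ψ k))
                nlinarith [(hd (ψ k)).le, habs.le]
              have h5 := clamp_key hck.1 (mul_pos (hd (ψ k)) (half_pos habs)) h1 h3
              rw [hm_inner i k]
              calc lam < (⟪Y (ψ k), φ i⟫ + ⟪X (ψ k), φ i⟫) / 2 := h5
                _ ≤ |(⟪X (ψ k), φ i⟫ + ⟪Y (ψ k), φ i⟫) / 2| := by
                    rw [add_comm (⟪Y (ψ k), φ i⟫ : ℝ)]; exact le_abs_self _
            · have hD : ∀ᶠ k in atTop, (⟪ub, φ i⟫ : ℝ) / 2 < ⟪U (ψ k), φ i⟫ :=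
                (hwt i).eventually_const_lt (by linarith)
              filter_upwards [hC, hD, hB8] with k hck hdk hbk
              have hva : |(⟪ub, φ i⟫ : ℝ)| = ⟪ub, φ i⟫ := abs_of_pos hvpos
              have h1 : ‖X (ψ k) - Y (ψ k)‖ * (|(⟪ub, φ i⟫ : ℝ)| / 2)
                  ≤ ⟪X (ψ k), φ i⟫ - ⟪Y (ψ k), φ i⟫ := by
                rw [hab i k]
                apply mul_le_mul_of_nonneg_left _ (hd (ψ k)).le
                rw [hva]; linarith
              have h3 : max (min (⟪X (ψ k), φ i⟫ : ℝ) lam) (-lam)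
                  - max (min (⟪Y (ψ k), φ i⟫ : ℝ) lam) (-lam)
                  < ‖X (ψ k) - Y (ψ k)‖ * (|(⟪ub, φ i⟫ : ℝ)| / 2) / 2 := by
                have h4 := hcb i k
                have h5 : max (min (⟪X (ψ k), φ i⟫ : ℝ) lam) (-lam)
                    - max (min (⟪Y (ψ k), φ i⟫ : ℝ) lam) (-lam)
                    ≤ |max (min (⟪X (ψ k), φ i⟫ : ℝ) lam) (-lam)
                    - max (min (⟪Y (ψ k), φ i⟫ : ℝ) lam) (-lam)| := le_abs_self _
                have h6 : ‖X (ψ k) - Y (ψ k)‖ * (1 / (ψ k + 1))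
                    < ‖X (ψ k) - Y (ψ k)‖ * (|(⟪ub, φ i⟫ : ℝ)| / 8) :=
                  mul_lt_mul_of_pos_left hbk (hd (ψ k))
                nlinarith [(hd (ψ k)).le, habs.le]
              have h5 := clamp_key hck.2 (mul_pos (hd (ψ k)) (half_pos habs)) h1 h3
              rw [hm_inner i k]
              exact h5.trans_le (le_abs_self _)
          · -- ⟪xb, φ i⟫ = -lam
            have hC : ∀ᶠ k in atTop, (⟪X (ψ k), φ i⟫ : ℝ) < 0 ∧ (⟪Y (ψ k), φ i⟫ : ℝ) < 0 :=
              ((hat i).eventually_lt_const (by rw [htl]; linarith)).and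
                ((hbt i).eventually_lt_const (by rw [htl]; linarith))
            rcases lt_or_gt_of_ne hv with hvneg | hvpos
            · have hD : ∀ᶠ k in atTop, (⟪U (ψ k), φ i⟫ : ℝ) < ⟪ub, φ i⟫ / 2 :=
                (hwt i).eventually_lt_const (by linarith)
              filter_upwards [hC, hD, hB8] with k hck hdk hbk
              have hva : |(⟪ub, φ i⟫ : ℝ)| = -⟪ub, φ i⟫ := abs_of_neg hvneg
              have h1 : ‖X (ψ k) - Y (ψ k)‖ * (|(⟪ub, φ i⟫ : ℝ)| / 2)
                  ≤ (-⟪X (ψ k), φ i⟫) - (-⟪Y (ψ k), φ i⟫) := by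
                have h2 : (-⟪X (ψ k), φ i⟫ : ℝ) - (-⟪Y (ψ k), φ i⟫)
                    = ‖X (ψ k) - Y (ψ k)‖ * (-⟪U (ψ k), φ i⟫) := by
                  have := hab i k; linarith [this]
                rw [h2]
                apply mul_le_mul_of_nonneg_left _ (hd (ψ k)).le
                rw [hva]; linarith
              have h3 : max (min (-⟪X (ψ k), φ i⟫ : ℝ) lam) (-lam)
                  - max (min (-⟪Y (ψ k), φ i⟫ : ℝ) lam) (-lam)
                  < ‖X (ψ k) - Y (ψ k)‖ * (|(⟪ub, φ i⟫ : ℝ)| / 2) / 2 := by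
                rw [clamp_neg lam _ hlam.le, clamp_neg lam _ hlam.le]
                have h4 := hcb i k
                have h5 : -max (min (⟪X (ψ k), φ i⟫ : ℝ) lam) (-lam)
                    - -max (min (⟪Y (ψ k), φ i⟫ : ℝ) lam) (-lam)
                    ≤ |max (min (⟪X (ψ k), φ i⟫ : ℝ) lam) (-lam)
                    - max (min (⟪Y (ψ k), φ i⟫ : ℝ) lam) (-lam)| := by
                  rw [abs_sub_comm]; linarith [le_abs_self (max (min (⟪Y (ψ k), φ i⟫ : ℝ) lam) (-lam)
                    - max (min (⟪X (ψ k), φ i⟫ : ℝ) lam) (-lam))]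
                have h6 : ‖X (ψ k) - Y (ψ k)‖ * (1 / (ψ k + 1))
                    < ‖X (ψ k) - Y (ψ k)‖ * (|(⟪ub, φ i⟫ : ℝ)| / 8) :=
                  mul_lt_mul_of_pos_left hbk (hd (ψ k))
                nlinarith [(hd (ψ k)).le, habs.le]
              have h5 := clamp_key (by linarith [hck.2] : (0:ℝ) < -⟪Y (ψ k), φ i⟫)
                (mul_pos (hd (ψ k)) (half_pos habs)) h1 h3
              rw [hm_inner i k]
              calc lam < -((⟪X (ψ k), φ i⟫ + ⟪Y (ψ k), φ i⟫) / 2) := by linarith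
                _ ≤ |(⟪X (ψ k), φ i⟫ + ⟪Y (ψ k), φ i⟫) / 2| := neg_le_abs _
            · have hD : ∀ᶠ k in atTop, (⟪ub, φ i⟫ : ℝ) / 2 < ⟪U (ψ k), φ i⟫ :=
                (hwt i).eventually_const_lt (by linarith)
              filter_upwards [hC, hD, hB8] with k hck hdk hbk
              have hva : |(⟪ub, φ i⟫ : ℝ)| = ⟪ub, φ i⟫ := abs_of_pos hvpos
              have h1 : ‖X (ψ k) - Y (ψ k)‖ * (|(⟪ub, φ i⟫ : ℝ)| / 2)
                  ≤ (-⟪Y (ψ k), φ i⟫) - (-⟪X (ψ k), φ i⟫) := by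
                have h2 : (-⟪Y (ψ k), φ i⟫ : ℝ) - (-⟪X (ψ k), φ i⟫)
                    = ‖X (ψ k) - Y (ψ k)‖ * ⟪U (ψ k), φ i⟫ := by
                  have := hab i k; linarith [this]
                rw [h2]
                apply mul_le_mul_of_nonneg_left _ (hd (ψ k)).le
                rw [hva]; linarith
              have h3 : max (min (-⟪Y (ψ k), φ i⟫ : ℝ) lam) (-lam)
                  - max (min (-⟪X (ψ k), φ i⟫ : ℝ) lam) (-lam)
                  < ‖X (ψ k) - Y (ψ k)‖ * (|(⟪ub, φ i⟫ : ℝ)| / 2) / 2 := by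
                rw [clamp_neg lam _ hlam.le, clamp_neg lam _ hlam.le]
                have h4 := hcb i k
                have h5 : -max (min (⟪Y (ψ k), φ i⟫ : ℝ) lam) (-lam)
                    - -max (min (⟪X (ψ k), φ i⟫ : ℝ) lam) (-lam)
                    ≤ |max (min (⟪X (ψ k), φ i⟫ : ℝ) lam) (-lam)
                    - max (min (⟪Y (ψ k), φ i⟫ : ℝ) lam) (-lam)| :=
                  by linarith [le_abs_self (max (min (⟪X (ψ k), φ i⟫ : ℝ) lam) (-lam)
                    - max (min (⟪Y (ψ k), φ i⟫ : ℝ) lam) (-lam))]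
                have h6 : ‖X (ψ k) - Y (ψ k)‖ * (1 / (ψ k + 1))
                    < ‖X (ψ k) - Y (ψ k)‖ * (|(⟪ub, φ i⟫ : ℝ)| / 8) :=
                  mul_lt_mul_of_pos_left hbk (hd (ψ k))
                nlinarith [(hd (ψ k)).le, habs.le]
              have h5 := clamp_key (by linarith [hck.1] : (0:ℝ) < -⟪X (ψ k), φ i⟫)
                (mul_pos (hd (ψ k)) (half_pos habs)) h1 h3
              rw [hm_inner i k]
              calc lam < -((⟪X (ψ k), φ i⟫ + ⟪Y (ψ k), φ i⟫) / 2) := by linarith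
                _ ≤ |(⟪X (ψ k), φ i⟫ + ⟪Y (ψ k), φ i⟫) / 2| := neg_le_abs _
        · -- saturated coordinate
          exact ((((hinner_cont (φ i))).tendsto xb).comp hmt).abs.eventually_const_lt hti
      -- midpoints are strictly inside the ball
      have hmlt : ∀ k, ‖(2⁻¹ : ℝ) • (X (ψ k) + Y (ψ k))‖ < 1 := by
        intro k
        have hpar := parallelogram_law_with_norm ℝ (X (ψ k)) (Y (ψ k))
        have hx1 : ‖X (ψ k)‖ ≤ 1 := by
          simpa [hB, Metric.mem_closedBall, dist_zero_right] using hP1 (ψ k)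
        have hy1 : ‖Y (ψ k)‖ ≤ 1 := by
          simpa [hB, Metric.mem_closedBall, dist_zero_right] using hP2 (ψ k)
        have hd1 := hd (ψ k)
        have hxx : ‖X (ψ k)‖ * ‖X (ψ k)‖ ≤ 1 :=
          mul_le_one₀ hx1 (norm_nonneg _) hx1
        have hyy : ‖Y (ψ k)‖ * ‖Y (ψ k)‖ ≤ 1 :=
          mul_le_one₀ hy1 (norm_nonneg _) hy1
        have hsum : ‖X (ψ k) + Y (ψ k)‖ * ‖X (ψ k) + Y (ψ k)‖ < 4 := by
          nlinarith [hpar, mul_pos hd1 hd1]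
        have hsum2 : ‖X (ψ k) + Y (ψ k)‖ < 2 := by
          nlinarith [norm_nonneg (X (ψ k) + Y (ψ k))]
        rw [norm_smul]
        have : ‖(2⁻¹ : ℝ)‖ = 2⁻¹ := by norm_num
        rw [this]
        linarith
      have hkey' : ∀ᶠ k in atTop, ∀ i, (⟪ub, φ i⟫ : ℝ) = 0 ∨
          lam < |(⟪(2⁻¹ : ℝ) • (X (ψ k) + Y (ψ k)), φ i⟫ : ℝ)| :=
        eventually_all.2 fun i => (key i).elim
          (fun h => Eventually.of_forall fun k => Or.inl h)
          (fun h => h.mono fun k hk => Or.inr hk)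
      obtain ⟨k₀, hk₀⟩ := hkey'.exists
      obtain ⟨M, hMdef⟩ : ∃ M : EuclideanSpace ℝ (Fin n),
          M = (2⁻¹ : ℝ) • (X (ψ k₀) + Y (ψ k₀)) := ⟨_, rfl⟩
      rw [← hMdef] at hk₀
      have hM1 : ‖M‖ < 1 := by rw [hMdef]; exact hmlt k₀
      -- choose a small positive ε
      have heps1 : ∀ᶠ ε : ℝ in 𝓝 (0 : ℝ), |ε| < 1 - ‖M‖ := by
        have habs0 : Tendsto (fun ε : ℝ => |ε|) (𝓝 0) (𝓝 0) := by
          simpa using (continuous_abs.tendsto (0 : ℝ))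
        exact habs0.eventually_lt_const (by linarith)
      have heps2 : ∀ᶠ ε : ℝ in 𝓝 (0 : ℝ), ∀ i,
          lam < |(⟪M, φ i⟫ : ℝ)| → |ε| * |(⟪ub, φ i⟫ : ℝ)| < |(⟪M, φ i⟫ : ℝ)| - lam := by
        refine eventually_all.2 fun i => ?_
        by_cases hact : lam < |(⟪M, φ i⟫ : ℝ)|
        · have htmul : Tendsto (fun ε : ℝ => |ε| * |(⟪ub, φ i⟫ : ℝ)|) (𝓝 0) (𝓝 0) := by
            have habs0 : Tendsto (fun ε : ℝ => |ε|) (𝓝 0) (𝓝 0) := by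
              simpa using (continuous_abs.tendsto (0 : ℝ))
            simpa using habs0.mul_const (|(⟪ub, φ i⟫ : ℝ)|)
          exact (htmul.eventually_lt_const (by linarith)).mono fun ε hε _ => hε
        · exact Eventually.of_forall fun ε h => absurd h hact
      obtain ⟨ε, ⟨hε1, hε2⟩, hεpos⟩ :=
        ((((heps1.and heps2)).filter_mono
            (nhdsWithin_le_nhds (s := Set.Ioi (0:ℝ)))).and
          eventually_mem_nhdsWithin).exists
      replace hεpos : 0 < ε := hεpos
      -- the two points that S cannot distinguish
      have hMmem : M ∈ B := by
        rw [hB, Metric.mem_closedBall, dist_zero_right]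
        exact hM1.le
      have hM2mem : M + ε • ub ∈ B := by
        rw [hB, Metric.mem_closedBall, dist_zero_right]
        calc ‖M + ε • ub‖ ≤ ‖M‖ + ‖ε • ub‖ := norm_add_le _ _
          _ = ‖M‖ + |ε| * 1 := by rw [norm_smul, Real.norm_eq_abs, hub]
          _ ≤ 1 := by linarith
      have hSeq : S M = S (M + ε • ub) := by
        refine PiLp.ext fun i => ?_
        rw [hS' _ i, hS' _ i, inner_add_left, real_inner_smul_left]
        rcases hk₀ i with h0 | hact
        · rw [h0, mul_zero, add_zero]
        · have hne := hε2 i hact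
          have habsb : |ε * ⟪ub, φ i⟫| < |(⟪M, φ i⟫ : ℝ)| - lam := by
            rw [abs_mul]; exact hne
          rcases lt_abs.mp hact with hpos | hneg
          · have h1 : lam ≤ (⟪M, φ i⟫ : ℝ) := hpos.le
            have h2 : lam ≤ (⟪M, φ i⟫ : ℝ) + ε * ⟪ub, φ i⟫ := by
              have := abs_lt.mp habsb
              rw [abs_of_pos (by linarith : (0:ℝ) < ⟪M, φ i⟫)] at this
              linarith [this.1]
            rw [clamp_ge hlam.le h1, clamp_ge hlam.le h2]
          · have h1 : (⟪M, φ i⟫ : ℝ) ≤ -lam := by linarith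
            have h2 : (⟪M, φ i⟫ : ℝ) + ε * ⟪ub, φ i⟫ ≤ -lam := by
              have := abs_lt.mp habsb
              rw [abs_of_neg (by linarith : (⟪M, φ i⟫ : ℝ) < 0)] at this
              linarith [this.2]
            rw [clamp_le' hlam.le h1, clamp_le' hlam.le h2]
      have heq := hinj hMmem hM2mem hSeq
      have hz : ε • ub = 0 := by
        have := heq.symm
        rwa [add_eq_left] at this
      rcases smul_eq_zero.mp hz with h | h
      · exact absurd h hεpos.ne'
      · rw [h, norm_zero] at hub
        norm_num at hub
    · -- limits distinct : contradiction with injectivity directly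
      have hSt : Tendsto (fun k => S (X (ψ k)) - S (Y (ψ k))) atTop (𝓝 (S xb - S yb)) :=
        ((hScont.tendsto _).comp hXt).sub ((hScont.tendsto _).comp hYt)
      have h0 : ‖S xb - S yb‖ = 0 := tendsto_nhds_unique hSt.norm hS0
      rw [norm_eq_zero, sub_eq_zero] at h0
      exact hxyb (hinj hLmem.1 hLmem.2.1 h0)
  · rintro ⟨c, C, hc, hcC, h⟩ x hx y hy hxy
    have h1 := (h x hx y hy).1
    rw [hxy, sub_self, norm_zero] at h1
    have h2 : ‖x - y‖ = 0 := by nlinarith [norm_nonneg (x - y)]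
    rwa [norm_sub_eq_zero_iff] at h2
end

section
/- Let (φ_i)_{i∈I} be a finite frame for ℝ^n and let M(x) = (|⟨x,φ_i⟩|)_{i∈I} be the intensity measurement operator, regarded as a map on ℝ^n/{±1} equipped with the distance d(x,y) = min(‖x−y‖, ‖x+y‖). Then: (a) if A ≥ 0 is such that for every x, y ∈ ℝ^n, A is a lower frame bound of (φ_i)_{i∈I⁺(x,y)} or A is a lower frame bound of (φ_i)_{i∈I⁻(x,y)}, then A·min(‖x−y‖, ‖x+y‖)² ≤ ‖M(x) − M(y)‖² for all x, y ∈ ℝ^n; (b) if κ ≥ 0 satisfies κ·min(‖x−y‖, ‖x+y‖) ≤ ‖M(x) − M(y)‖ for all x, y ∈ ℝ^n, then for every subset J ⊆ I, either κ²/2 is a lower frame bound of (φ_i)_{i∈J} or κ²/2 is a lower frame bound of (φ_i)_{i∈I∖J}. In the notation of the paper: √(A_{|·|}) ≤ κ_L ≤ √2·σ. -/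
open RealInnerProductSpace Finset

private lemma eucl_norm_sq' {ι : Type*} [Fintype ι] (w : EuclideanSpace ℝ ι) :
    ‖w‖ ^ 2 = ∑ i, (w i) ^ 2 := by
  rw [EuclideanSpace.norm_eq, Real.sq_sqrt (by positivity)]
  simp [sq_abs]

private lemma sq_eq_pos' (a b : ℝ) (h : 0 ≤ a * b) : (a - b) ^ 2 = (|a| - |b|) ^ 2 := by
  have h1 : |a| * |b| = a * b := by rw [← abs_mul]; exact abs_of_nonneg h
  nlinarith [sq_abs a, sq_abs b]

private lemma sq_eq_neg' (a b : ℝ) (h : a * b ≤ 0) : (a + b) ^ 2 = (|a| - |b|) ^ 2 := by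
  have h1 : |a| * |b| = -(a * b) := by rw [← abs_mul]; exact abs_of_nonpos h
  nlinarith [sq_abs a, sq_abs b]

private lemma sq_le_add' (a b : ℝ) : (|a| - |b|) ^ 2 ≤ (a + b) ^ 2 := by
  nlinarith [sq_abs a, sq_abs b, abs_mul a b, neg_abs_le (a * b)]

private lemma sq_le_sub' (a b : ℝ) : (|a| - |b|) ^ 2 ≤ (a - b) ^ 2 := by
  nlinarith [sq_abs a, sq_abs b, abs_mul a b, le_abs_self (a * b)]

/-- Lipschitz bounds for the intensity measurement operator
`M(x) = (|⟨x,φ_i⟩|)_i` on `ℝ^n/{±1}` with distance `min(‖x−y‖, ‖x+y‖)`: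
(a) if for every pair `x, y` the number `A` is a lower frame bound of the subfamily
indexed by `I⁺(x,y)` or of the one indexed by `I⁻(x,y)`, then
`A·min(‖x−y‖,‖x+y‖)² ≤ ‖M(x) − M(y)‖²`;
(b) if `κ` is a lower Lipschitz bound of `M`, then for every `J ⊆ I` the number
`κ²/2` is a lower frame bound of the subfamily indexed by `J` or of the one indexed
by its complement (i.e. `(φ_i)` has the `(κ/√2)`-strong complement property). -/
theorem phase_retrieval_lipschitz_bounds
    {n : ℕ} {ι : Type*} [Fintype ι] [DecidableEq ι]
    (φ : ι → EuclideanSpace ℝ (Fin n))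
    (hframe : Submodule.span ℝ (Set.range φ) = ⊤)
    (M : EuclideanSpace ℝ (Fin n) → EuclideanSpace ℝ ι)
    (hM : ∀ x, M x = fun i : ι => |⟪x, φ i⟫|) :
    ((∀ A : ℝ, 0 ≤ A →
        (∀ x y : EuclideanSpace ℝ (Fin n),
          (∀ z : EuclideanSpace ℝ (Fin n),
            A * ‖z‖ ^ 2 ≤
              ∑ i ∈ univ.filter (fun i : ι => 0 ≤ ⟪x, φ i⟫ * ⟪y, φ i⟫), ⟪z, φ i⟫ ^ 2) ∨
          (∀ z : EuclideanSpace ℝ (Fin n),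
            A * ‖z‖ ^ 2 ≤
              ∑ i ∈ univ.filter (fun i : ι => ⟪x, φ i⟫ * ⟪y, φ i⟫ ≤ 0), ⟪z, φ i⟫ ^ 2)) →
        ∀ x y : EuclideanSpace ℝ (Fin n),
          A * (min ‖x - y‖ ‖x + y‖) ^ 2 ≤ ‖M x - M y‖ ^ 2) ∧
      (∀ κ : ℝ, 0 ≤ κ →
        (∀ x y : EuclideanSpace ℝ (Fin n),
          κ * min ‖x - y‖ ‖x + y‖ ≤ ‖M x - M y‖) →
        ∀ J : Finset ι,
          (∀ z : EuclideanSpace ℝ (Fin n),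
            κ ^ 2 / 2 * ‖z‖ ^ 2 ≤ ∑ i ∈ J, ⟪z, φ i⟫ ^ 2) ∨
          (∀ z : EuclideanSpace ℝ (Fin n),
            κ ^ 2 / 2 * ‖z‖ ^ 2 ≤ ∑ i ∈ Jᶜ, ⟪z, φ i⟫ ^ 2))) := by
  have hMsq : ∀ x y, ‖M x - M y‖ ^ 2 = ∑ i, (|⟪x, φ i⟫| - |⟪y, φ i⟫|) ^ 2 := by
    intro x y
    rw [eucl_norm_sq']
    refine Finset.sum_congr rfl fun i _ => ?_
    simp [hM]
  constructor
  · -- part (a)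
    intro A hA h x y
    have hmin0 : 0 ≤ min ‖x - y‖ ‖x + y‖ := le_min (norm_nonneg _) (norm_nonneg _)
    rcases h x y with hp | hn
    · calc A * (min ‖x - y‖ ‖x + y‖) ^ 2 ≤ A * ‖x - y‖ ^ 2 := by
            exact mul_le_mul_of_nonneg_left
              (pow_le_pow_left₀ hmin0 (min_le_left _ _) 2) hA
        _ ≤ ∑ i ∈ univ.filter (fun i : ι => 0 ≤ ⟪x, φ i⟫ * ⟪y, φ i⟫), ⟪x - y, φ i⟫ ^ 2 :=
            hp (x - y)
        _ = ∑ i ∈ univ.filter (fun i : ι => 0 ≤ ⟪x, φ i⟫ * ⟪y, φ i⟫),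
              (|⟪x, φ i⟫| - |⟪y, φ i⟫|) ^ 2 := by
            refine Finset.sum_congr rfl fun i hi => ?_
            rw [mem_filter] at hi
            rw [inner_sub_left]
            exact sq_eq_pos' _ _ hi.2
        _ ≤ ∑ i, (|⟪x, φ i⟫| - |⟪y, φ i⟫|) ^ 2 :=
            Finset.sum_le_sum_of_subset_of_nonneg (filter_subset _ _)
              (fun i _ _ => sq_nonneg _)
        _ = ‖M x - M y‖ ^ 2 := (hMsq x y).symm
    · calc A * (min ‖x - y‖ ‖x + y‖) ^ 2 ≤ A * ‖x + y‖ ^ 2 := by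
            exact mul_le_mul_of_nonneg_left
              (pow_le_pow_left₀ hmin0 (min_le_right _ _) 2) hA
        _ ≤ ∑ i ∈ univ.filter (fun i : ι => ⟪x, φ i⟫ * ⟪y, φ i⟫ ≤ 0), ⟪x + y, φ i⟫ ^ 2 :=
            hn (x + y)
        _ = ∑ i ∈ univ.filter (fun i : ι => ⟪x, φ i⟫ * ⟪y, φ i⟫ ≤ 0),
              (|⟪x, φ i⟫| - |⟪y, φ i⟫|) ^ 2 := by
            refine Finset.sum_congr rfl fun i hi => ?_
            rw [mem_filter] at hi
            rw [inner_add_left]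
            exact sq_eq_neg' _ _ hi.2
        _ ≤ ∑ i, (|⟪x, φ i⟫| - |⟪y, φ i⟫|) ^ 2 :=
            Finset.sum_le_sum_of_subset_of_nonneg (filter_subset _ _)
              (fun i _ _ => sq_nonneg _)
        _ = ‖M x - M y‖ ^ 2 := (hMsq x y).symm
  · -- part (b)
    intro κ hκ hlip J
    by_contra hcon
    push_neg at hcon
    obtain ⟨⟨u, hu⟩, ⟨v, hv⟩⟩ := hcon
    have hsum_u : (0:ℝ) ≤ ∑ i ∈ J, ⟪u, φ i⟫ ^ 2 := Finset.sum_nonneg fun i _ => sq_nonneg _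
    have hsum_v : (0:ℝ) ≤ ∑ i ∈ Jᶜ, ⟪v, φ i⟫ ^ 2 := Finset.sum_nonneg fun i _ => sq_nonneg _
    have hupos : 0 < κ ^ 2 / 2 * ‖u‖ ^ 2 := lt_of_le_of_lt hsum_u hu
    have hvpos : 0 < κ ^ 2 / 2 * ‖v‖ ^ 2 := lt_of_le_of_lt hsum_v hv
    have hun : u ≠ 0 := by
      rintro rfl; simp at hupos
    have hvn : v ≠ 0 := by
      rintro rfl; simp at hvpos
    have hu0 : (0:ℝ) < ‖u‖ := norm_pos_iff.mpr hun
    have hv0 : (0:ℝ) < ‖v‖ := norm_pos_iff.mpr hvn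
    set u₀ : EuclideanSpace ℝ (Fin n) := ‖u‖⁻¹ • u with hu₀def
    set v₀ : EuclideanSpace ℝ (Fin n) := ‖v‖⁻¹ • v with hv₀def
    have hnu₀ : ‖u₀‖ = 1 := norm_smul_inv_norm hun
    have hnv₀ : ‖v₀‖ = 1 := norm_smul_inv_norm hvn
    have hu₀sum : ∑ i ∈ J, ⟪u₀, φ i⟫ ^ 2 < κ ^ 2 / 2 := by
      have : ∑ i ∈ J, ⟪u₀, φ i⟫ ^ 2 = ‖u‖⁻¹ ^ 2 * ∑ i ∈ J, ⟪u, φ i⟫ ^ 2 := by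
        rw [Finset.mul_sum]
        refine Finset.sum_congr rfl fun i _ => ?_
        rw [hu₀def, real_inner_smul_left]; ring
      rw [this]
      calc ‖u‖⁻¹ ^ 2 * ∑ i ∈ J, ⟪u, φ i⟫ ^ 2
          < ‖u‖⁻¹ ^ 2 * (κ ^ 2 / 2 * ‖u‖ ^ 2) := by
            exact mul_lt_mul_of_pos_left hu (by positivity)
        _ = κ ^ 2 / 2 := by field_simp
    have hv₀sum : ∑ i ∈ Jᶜ, ⟪v₀, φ i⟫ ^ 2 < κ ^ 2 / 2 := by
      have : ∑ i ∈ Jᶜ, ⟪v₀, φ i⟫ ^ 2 = ‖v‖⁻¹ ^ 2 * ∑ i ∈ Jᶜ, ⟪v, φ i⟫ ^ 2 := by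
        rw [Finset.mul_sum]
        refine Finset.sum_congr rfl fun i _ => ?_
        rw [hv₀def, real_inner_smul_left]; ring
      rw [this]
      calc ‖v‖⁻¹ ^ 2 * ∑ i ∈ Jᶜ, ⟪v, φ i⟫ ^ 2
          < ‖v‖⁻¹ ^ 2 * (κ ^ 2 / 2 * ‖v‖ ^ 2) := by
            exact mul_lt_mul_of_pos_left hv (by positivity)
        _ = κ ^ 2 / 2 := by field_simp
    set x := u₀ + v₀ with hxdef
    set y := u₀ - v₀ with hydef
    have hxmy : x - y = (2:ℝ) • v₀ := by rw [hxdef, hydef]; module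
    have hxpy : x + y = (2:ℝ) • u₀ := by rw [hxdef, hydef]; module
    have hnxmy : ‖x - y‖ = 2 := by
      rw [hxmy, norm_smul, hnv₀]; norm_num
    have hnxpy : ‖x + y‖ = 2 := by
      rw [hxpy, norm_smul, hnu₀]; norm_num
    have hlipxy : κ * 2 ≤ ‖M x - M y‖ := by
      have := hlip x y
      rwa [hnxmy, hnxpy, min_self] at this
    have h4 : 4 * κ ^ 2 ≤ ‖M x - M y‖ ^ 2 := by
      have h2 : (κ * 2) ^ 2 ≤ ‖M x - M y‖ ^ 2 :=
        pow_le_pow_left₀ (by positivity) hlipxy 2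
      nlinarith
    have hub : ‖M x - M y‖ ^ 2 < 4 * κ ^ 2 := by
      rw [hMsq x y, ← Finset.sum_add_sum_compl J]
      have h1 : ∑ i ∈ J, (|⟪x, φ i⟫| - |⟪y, φ i⟫|) ^ 2 ≤ ∑ i ∈ J, 4 * ⟪u₀, φ i⟫ ^ 2 := by
        refine Finset.sum_le_sum fun i _ => ?_
        have habs := sq_le_add' ⟪x, φ i⟫ ⟪y, φ i⟫
        have hsum : ⟪x, φ i⟫ + ⟪y, φ i⟫ = 2 * ⟪u₀, φ i⟫ := by
          rw [hxdef, hydef, inner_add_left, inner_sub_left]; ring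
        calc (|⟪x, φ i⟫| - |⟪y, φ i⟫|) ^ 2 ≤ (⟪x, φ i⟫ + ⟪y, φ i⟫) ^ 2 := habs
          _ = 4 * ⟪u₀, φ i⟫ ^ 2 := by rw [hsum]; ring
      have h2 : ∑ i ∈ Jᶜ, (|⟪x, φ i⟫| - |⟪y, φ i⟫|) ^ 2 ≤ ∑ i ∈ Jᶜ, 4 * ⟪v₀, φ i⟫ ^ 2 := by
        refine Finset.sum_le_sum fun i _ => ?_
        have habs := sq_le_sub' ⟪x, φ i⟫ ⟪y, φ i⟫
        have hsub : ⟪x, φ i⟫ - ⟪y, φ i⟫ = 2 * ⟪v₀, φ i⟫ := by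
          rw [hxdef, hydef, inner_add_left, inner_sub_left]; ring
        calc (|⟪x, φ i⟫| - |⟪y, φ i⟫|) ^ 2 ≤ (⟪x, φ i⟫ - ⟪y, φ i⟫) ^ 2 := habs
          _ = 4 * ⟪v₀, φ i⟫ ^ 2 := by rw [hsub]; ring
      have h1' : ∑ i ∈ J, 4 * ⟪u₀, φ i⟫ ^ 2 < 4 * (κ ^ 2 / 2) := by
        rw [← Finset.mul_sum]
        exact mul_lt_mul_of_pos_left hu₀sum (by norm_num)
      have h2' : ∑ i ∈ Jᶜ, 4 * ⟪v₀, φ i⟫ ^ 2 < 4 * (κ ^ 2 / 2) := by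
        rw [← Finset.mul_sum]
        exact mul_lt_mul_of_pos_left hv₀sum (by norm_num)
      linarith
    linarith
end
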